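/- Let G be a finite simple graph and e an edge of the complement of G. Then γ*_{rk}(G) − k ≤ γ*_{rk}(G + e) ≤ γ*_{rk}(G) + 1, where G + e denotes the graph obtained from G by adding the edge e. -/

import Mathlib

open SimpleGraph Finset

/-- A `k`-rainbow dominating function on a graph `H`. -/
def IsRDF {W : Type*} (H : SimpleGraph W) (k : ℕ) (f : W → Finset (Fin k)) : Prop :=
  ∀ w, f w = ∅ → ∀ c : Fin k, ∃ u, H.Adj w u ∧ c ∈ f u

/-- The weight of a rainbow dominating function. -/
noncomputable def rdfWeight {W : Type*} [Fintype W] {k : ℕ} (f : W → Finset (Fin k)) : ℕ :=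
  ∑ w, (f w).card

/-- The `k`-rainbow domination number of a graph. -/
noncomputable def rdn {W : Type*} [Fintype W] (H : SimpleGraph W) (k : ℕ) : ℕ :=
  sInf {n | ∃ f : W → Finset (Fin k), IsRDF H k f ∧ rdfWeight f = n}

/-- The middle graph of `G`, on vertex set `V(G) ⊕ E(G)`. -/
def middleGraph {V : Type*} (G : SimpleGraph V) : SimpleGraph (V ⊕ G.edgeSet) where
  Adj x y :=
    match x, y with
    | Sum.inl _, Sum.inl _ => False
    | Sum.inl v, Sum.inr e => v ∈ (e : Sym2 V)
    | Sum.inr e, Sum.inl v => v ∈ (e : Sym2 V)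
    | Sum.inr e, Sum.inr f => e ≠ f ∧ ∃ v, v ∈ (e : Sym2 V) ∧ v ∈ (f : Sym2 V)
  symm := by
    constructor
    rintro (v | e) (w | f) h
    · exact h.elim
    · exact h
    · exact h
    · exact ⟨Ne.symm h.1, h.2.imp fun v hv => ⟨hv.2, hv.1⟩⟩
  loopless := by
    constructor
    rintro (v | e) h
    · exact h.elim
    · exact h.1 rfl

/-- The middle `k`-rainbow domination number `γ*_{rk}(G)`. -/
noncomputable def mrdn {V : Type*} [Fintype V] (G : SimpleGraph V) (k : ℕ) : ℕ :=
  letI := Classical.decEq V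
  letI : DecidableRel G.Adj := fun _ _ => Classical.dec _
  rdn (middleGraph G) k

/-- The `k`-rainbow domatic number: the maximum size of a family of `k`-rainbow
dominating functions with `∑ i |f i v| ≤ k` for each vertex `v`. -/
noncomputable def rdomatic {W : Type*} (H : SimpleGraph W) (k : ℕ) : ℕ :=
  sSup {d | ∃ F : Fin d → W → Finset (Fin k), Function.Injective F ∧
    (∀ i, IsRDF H k (F i)) ∧ ∀ w, (∑ i, (F i w).card) ≤ k}

/-- The matching number `α'(G)`. -/
noncomputable def matchingNumber {V : Type*} [Fintype V] (G : SimpleGraph V) : ℕ :=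
  sSup {n | ∃ M : Finset (Sym2 V), ↑M ⊆ G.edgeSet ∧
    (∀ e ∈ M, ∀ f ∈ M, e ≠ f → ∀ v : V, ¬(v ∈ e ∧ v ∈ f)) ∧ M.card = n}

section AuxLemmas

lemma isRDF_univ' {W : Type*} (H : SimpleGraph W) (k : ℕ) :
    IsRDF H k (fun _ => (Finset.univ : Finset (Fin k))) := by
  intro w hw c
  have h : (Finset.univ : Finset (Fin k)) = ∅ := hw
  have hc : c ∈ (Finset.univ : Finset (Fin k)) := Finset.mem_univ c
  rw [h] at hc
  exact absurd hc (Finset.notMem_empty c)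

lemma rdn_le' {W : Type*} [Fintype W] (H : SimpleGraph W) (k : ℕ)
    (f : W → Finset (Fin k)) (hf : IsRDF H k f) : rdn H k ≤ rdfWeight f :=
  Nat.sInf_le ⟨f, hf, rfl⟩

lemma rdn_spec' {W : Type*} [Fintype W] (H : SimpleGraph W) (k : ℕ) :
    ∃ f : W → Finset (Fin k), IsRDF H k f ∧ rdfWeight f = rdn H k := by
  have hne : {n | ∃ f : W → Finset (Fin k), IsRDF H k f ∧ rdfWeight f = n}.Nonempty :=
    ⟨rdfWeight (fun _ : W => (Finset.univ : Finset (Fin k))),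
      ⟨fun _ => Finset.univ, isRDF_univ' H k, rfl⟩⟩
  exact Nat.sInf_mem hne

lemma rdn_zero' {W : Type*} {instW : Fintype W} (H : SimpleGraph W) : rdn H 0 = 0 :=
  Nat.le_zero.1 (Nat.sInf_le ⟨fun _ => ∅, fun _ _ c => c.elim0, by simp [rdfWeight]⟩)

lemma rdn_eq_of_inst {W : Type*} {i1 i2 : Fintype W} {H : SimpleGraph W} {k : ℕ} :
    @rdn W i1 H k = @rdn W i2 H k := by
  cases Subsingleton.elim i1 i2
  rfl

lemma sum_split' {α M : Type*} [AddCommMonoid M] {s s' : Set α} {e : α} (he : e ∉ s)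
    (hmem : ∀ x, x ∈ s' ↔ x ∈ s ∨ x = e) [Fintype ↑s] [Fintype ↑s'] (g : ↑s' → M) :
    ∑ x, g x = (∑ x : ↑s, g ⟨x.1, (hmem _).2 (Or.inl x.2)⟩) + g ⟨e, (hmem e).2 (Or.inr rfl)⟩ := by
  classical
  let eqv : ↑s ⊕ Unit ≃ ↑s' :=
    { toFun := Sum.elim (fun x => ⟨x.1, (hmem _).2 (Or.inl x.2)⟩)
        (fun _ => ⟨e, (hmem e).2 (Or.inr rfl)⟩)
      invFun := fun y => if h : (y : α) ∈ s then Sum.inl ⟨y, h⟩ else Sum.inr ()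
      left_inv := by
        rintro (x | ⟨⟩)
        · simp only [Sum.elim_inl]
          simp [x.2]
        · simp only [Sum.elim_inr]
          simp [he]
      right_inv := by
        rintro ⟨y, hy⟩
        rcases (hmem y).1 hy with h | h
        · simp only [Sum.elim_inl, dif_pos h]
        · subst h
          simp only [Sum.elim_inr, dif_neg he] }
  rw [← Equiv.sum_comp eqv g, Fintype.sum_sum_type]
  have h1 : ∀ x : ↑s, g (eqv (Sum.inl x)) = g ⟨x.1, (hmem _).2 (Or.inl x.2)⟩ := fun _ => rfl
  have h2 : ∀ u : Unit, g (eqv (Sum.inr u)) = g ⟨e, (hmem e).2 (Or.inr rfl)⟩ := fun _ => rfl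
  rw [Fintype.sum_congr _ _ h1]
  congr 1
  rw [Fintype.sum_congr _ _ h2]
  simp

end AuxLemmas

section MainLemmas

variable {V : Type*} [Fintype V]

lemma hmem_aux (G : SimpleGraph V) (a b : V) (hab : a ≠ b) :
    ∀ x : Sym2 V, x ∈ (G ⊔ fromEdgeSet {s(a,b)}).edgeSet ↔ x ∈ G.edgeSet ∨ x = s(a,b) := by
  intro x
  simp only [edgeSet_sup, edgeSet_fromEdgeSet, Set.mem_union, Set.mem_diff,
    Set.mem_singleton_iff, Set.mem_setOf_eq]
  constructor
  · rintro (h | ⟨h, -⟩)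
    · exact Or.inl h
    · exact Or.inr h
  · rintro (h | h)
    · exact Or.inl h
    · refine Or.inr ⟨h, ?_⟩
      rw [h]
      simpa [Sym2.isDiag_iff_proj_eq] using hab

lemma main_up (G : SimpleGraph V) (k : ℕ) (hk : 0 < k) (a b : V) (hab : a ≠ b)
    (hnadj : ¬ G.Adj a b) [Fintype ↑G.edgeSet]
    [Fintype ↑(G ⊔ fromEdgeSet {s(a,b)}).edgeSet] :
    rdn (middleGraph (G ⊔ fromEdgeSet {s(a,b)})) k ≤ rdn (middleGraph G) k + 1 := by
  classical
  have heG : s(a,b) ∉ G.edgeSet := hnadj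
  have hmem : ∀ x : Sym2 V, x ∈ (G ⊔ fromEdgeSet {s(a,b)}).edgeSet ↔
      x ∈ G.edgeSet ∨ x = s(a,b) := hmem_aux G a b hab
  obtain ⟨f, hf, hw⟩ := rdn_spec' (middleGraph G) k
  set c0 : Fin k := ⟨0, hk⟩ with hc0
  set f' : (V ⊕ ↑(G ⊔ fromEdgeSet {s(a,b)}).edgeSet) → Finset (Fin k) :=
    Sum.elim (fun v => f (Sum.inl v))
      (fun g : ↑(G ⊔ fromEdgeSet {s(a,b)}).edgeSet =>
        if h : (g : Sym2 V) ∈ G.edgeSet then f (Sum.inr ⟨(g : Sym2 V), h⟩) else {c0})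
    with hf'def
  have hf'l : ∀ v : V, f' (Sum.inl v) = f (Sum.inl v) := fun _ => rfl
  have hf'r : ∀ (g : ↑(G ⊔ fromEdgeSet {s(a,b)}).edgeSet) (h : (g : Sym2 V) ∈ G.edgeSet),
      f' (Sum.inr g) = f (Sum.inr ⟨(g : Sym2 V), h⟩) := by
    intro g h
    rw [hf'def]
    simp only [Sum.elim_inr]
    rw [dif_pos h]
  have hf'e : ∀ (g : ↑(G ⊔ fromEdgeSet {s(a,b)}).edgeSet), (g : Sym2 V) ∉ G.edgeSet →
      f' (Sum.inr g) = {c0} := by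
    intro g h
    rw [hf'def]
    simp only [Sum.elim_inr]
    rw [dif_neg h]
  have hrdf : IsRDF (middleGraph (G ⊔ fromEdgeSet {s(a,b)})) k f' := by
    rintro (v | g) hw0 c
    · have hv : f (Sum.inl v) = ∅ := hw0
      obtain ⟨u, hu, hc⟩ := hf (Sum.inl v) hv c
      rcases u with v' | g0
      · exact (hu : False).elim
      · refine ⟨Sum.inr ⟨(g0 : Sym2 V), (hmem _).2 (Or.inl g0.2)⟩, hu, ?_⟩
        rw [hf'r _ g0.2]
        exact hc
    · by_cases hg : (g : Sym2 V) ∈ G.edgeSet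
      · have hge : f (Sum.inr ⟨(g : Sym2 V), hg⟩) = ∅ := by
          rw [← hf'r g hg]; exact hw0
        obtain ⟨u, hu, hc⟩ := hf (Sum.inr ⟨(g : Sym2 V), hg⟩) hge c
        rcases u with v' | g0
        · exact ⟨Sum.inl v', hu, hc⟩
        · have hne : (g : Sym2 V) ≠ (g0 : Sym2 V) := fun hh => hu.1 (Subtype.ext hh)
          refine ⟨Sum.inr ⟨(g0 : Sym2 V), (hmem _).2 (Or.inl g0.2)⟩,
            ⟨fun hh => hne (congrArg Subtype.val hh), hu.2⟩, ?_⟩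
          rw [hf'r _ g0.2]
          exact hc
      · rw [hf'e g hg] at hw0
        exact absurd hw0 (Finset.singleton_ne_empty c0)
  have hweq : rdfWeight f' = rdfWeight f + 1 := by
    unfold rdfWeight
    rw [Fintype.sum_sum_type, Fintype.sum_sum_type,
      sum_split' heG hmem
        (fun g : ↑(G ⊔ fromEdgeSet {s(a,b)}).edgeSet => (f' (Sum.inr g)).card)]
    have h2 : ∀ x : ↑G.edgeSet,
        (f' (Sum.inr (⟨(x : Sym2 V), (hmem _).2 (Or.inl x.2)⟩ :
            ↑(G ⊔ fromEdgeSet {s(a,b)}).edgeSet))).card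
          = (f (Sum.inr x)).card := by
      intro x
      rw [hf'r _ x.2]
    have h3 : (f' (Sum.inr (⟨s(a,b), (hmem _).2 (Or.inr rfl)⟩ :
        ↑(G ⊔ fromEdgeSet {s(a,b)}).edgeSet))).card = 1 := by
      rw [hf'e _ heG]
      exact Finset.card_singleton c0
    simp only [h2, h3, hf'l]
    omega
  calc rdn (middleGraph (G ⊔ fromEdgeSet {s(a,b)})) k ≤ rdfWeight f' := rdn_le' _ _ _ hrdf
    _ = rdn (middleGraph G) k + 1 := by rw [hweq, hw]

lemma main_down (G : SimpleGraph V) (k : ℕ) (hk : 0 < k) (a b : V) (hab : a ≠ b)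
    (hnadj : ¬ G.Adj a b) [Fintype ↑G.edgeSet]
    [Fintype ↑(G ⊔ fromEdgeSet {s(a,b)}).edgeSet] :
    rdn (middleGraph G) k ≤ rdn (middleGraph (G ⊔ fromEdgeSet {s(a,b)})) k + k := by
  classical
  have heG : s(a,b) ∉ G.edgeSet := hnadj
  have hmem : ∀ x : Sym2 V, x ∈ (G ⊔ fromEdgeSet {s(a,b)}).edgeSet ↔
      x ∈ G.edgeSet ∨ x = s(a,b) := hmem_aux G a b hab
  have hkne : Nonempty (Fin k) := ⟨⟨0, hk⟩⟩
  obtain ⟨f', hf', hw'⟩ := rdn_spec' (middleGraph (G ⊔ fromEdgeSet {s(a,b)})) k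
  set eE : ↑(G ⊔ fromEdgeSet {s(a,b)}).edgeSet := ⟨s(a,b), (hmem _).2 (Or.inr rfl)⟩ with heEdef
  set A : Finset (Fin k) := f' (Sum.inr eE) with hAdef
  set f : (V ⊕ ↑G.edgeSet) → Finset (Fin k) :=
    Sum.elim
      (fun v => if v = b then (Finset.univ : Finset (Fin k))
        else if v = a then f' (Sum.inl v) ∪ A else f' (Sum.inl v))
      (fun g : ↑G.edgeSet => f' (Sum.inr ⟨(g : Sym2 V), (hmem _).2 (Or.inl g.2)⟩))
    with hfdef
  have hfl : ∀ v : V, f (Sum.inl v) = if v = b then (Finset.univ : Finset (Fin k))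
      else if v = a then f' (Sum.inl v) ∪ A else f' (Sum.inl v) := fun _ => rfl
  have hfr : ∀ g : ↑G.edgeSet,
      f (Sum.inr g) = f' (Sum.inr ⟨(g : Sym2 V), (hmem _).2 (Or.inl g.2)⟩) := fun _ => rfl
  have edgeG : ∀ g0 : ↑(G ⊔ fromEdgeSet {s(a,b)}).edgeSet, g0 ≠ eE →
      (g0 : Sym2 V) ∈ G.edgeSet := by
    intro g0 hne
    rcases (hmem _).1 g0.2 with h | h
    · exact h
    · refine absurd ?_ hne
      rw [heEdef]
      exact Subtype.ext h
  have huniv_ne : (Finset.univ : Finset (Fin k)) ≠ ∅ := Finset.univ_nonempty.ne_empty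
  have hrdf : IsRDF (middleGraph G) k f := by
    rintro (v | g) hw0 c
    · rw [hfl] at hw0
      by_cases hvb : v = b
      · rw [if_pos hvb] at hw0
        exact absurd hw0 huniv_ne
      by_cases hva : v = a
      · rw [if_neg hvb, if_pos hva] at hw0
        obtain ⟨h1, h2⟩ := Finset.union_eq_empty.1 hw0
        obtain ⟨u, hu, hc⟩ := hf' (Sum.inl v) h1 c
        rcases u with v' | g0
        · exact (hu : False).elim
        · by_cases hg0 : g0 = eE
          · rw [hg0, ← hAdef, h2] at hc
            exact absurd hc (Finset.notMem_empty c)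
          · have hG := edgeG g0 hg0
            refine ⟨Sum.inr ⟨(g0 : Sym2 V), hG⟩, hu, ?_⟩
            rw [hfr]
            exact hc
      · rw [if_neg hvb, if_neg hva] at hw0
        obtain ⟨u, hu, hc⟩ := hf' (Sum.inl v) hw0 c
        rcases u with v' | g0
        · exact (hu : False).elim
        · by_cases hg0 : g0 = eE
          · have hv' : v ∈ (g0 : Sym2 V) := hu
            rw [hg0, heEdef] at hv'
            rcases Sym2.mem_iff.1 hv' with h | h
            · exact absurd h hva
            · exact absurd h hvb
          · have hG := edgeG g0 hg0
            refine ⟨Sum.inr ⟨(g0 : Sym2 V), hG⟩, hu, ?_⟩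
            rw [hfr]
            exact hc
    · rw [hfr] at hw0
      obtain ⟨u, hu, hc⟩ := hf' (Sum.inr ⟨(g : Sym2 V), (hmem _).2 (Or.inl g.2)⟩) hw0 c
      rcases u with v | h0
      · have hv : v ∈ (g : Sym2 V) := hu
        refine ⟨Sum.inl v, hv, ?_⟩
        rw [hfl]
        split_ifs with h1 h2
        · exact Finset.mem_univ c
        · subst h2
          exact Finset.mem_union_left _ hc
        · exact hc
      · obtain ⟨hne0, x, hx1, hx2⟩ := hu
        by_cases h0eE : h0 = eE
        · have hx2' : x ∈ s(a,b) := by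
            rw [h0eE, heEdef] at hx2
            exact hx2
          have hcA : c ∈ A := by
            rw [hAdef, ← h0eE]
            exact hc
          refine ⟨Sum.inl x, hx1, ?_⟩
          rw [hfl]
          rcases Sym2.mem_iff.1 hx2' with h | h
          · subst h
            rw [if_neg hab, if_pos rfl]
            exact Finset.mem_union_right _ hcA
          · subst h
            rw [if_pos rfl]
            exact Finset.mem_univ c
        · have hG := edgeG h0 h0eE
          refine ⟨Sum.inr ⟨(h0 : Sym2 V), hG⟩,
            ⟨fun hh => hne0 (Subtype.ext (show (g : Sym2 V) = (h0 : Sym2 V) from congrArg Subtype.val hh)), x, hx1, hx2⟩, ?_⟩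
          rw [hfr]
          exact hc
  have hwle : rdfWeight f ≤ rdfWeight f' + k := by
    have hpt : ∀ v : V, (f (Sum.inl v)).card ≤ (f' (Sum.inl v)).card +
        ((if v = b then k else 0) + (if v = a then A.card else 0)) := by
      intro v
      rw [hfl]
      split_ifs with h1 h2
      · simp only [Finset.card_univ, Fintype.card_fin]
        omega
      · simp only [Finset.card_univ, Fintype.card_fin]
        omega
      · have := Finset.card_union_le (f' (Sum.inl v)) A
        omega
      · omega
    have e1 : rdfWeight f = (∑ v : V, (f (Sum.inl v)).card)
        + ∑ g : ↑G.edgeSet, (f (Sum.inr g)).card := Fintype.sum_sum_type _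
    have e2 : rdfWeight f' = (∑ v : V, (f' (Sum.inl v)).card)
        + ((∑ g : ↑G.edgeSet,
            (f' (Sum.inr (⟨(g : Sym2 V), (hmem _).2 (Or.inl g.2)⟩ :
              ↑(G ⊔ fromEdgeSet {s(a,b)}).edgeSet))).card)
          + (f' (Sum.inr eE)).card) := by
      unfold rdfWeight
      rw [Fintype.sum_sum_type,
        sum_split' heG hmem
          (fun g : ↑(G ⊔ fromEdgeSet {s(a,b)}).edgeSet => (f' (Sum.inr g)).card)]
    have e3 : ∑ g : ↑G.edgeSet, (f (Sum.inr g)).card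
        = ∑ g : ↑G.edgeSet,
            (f' (Sum.inr (⟨(g : Sym2 V), (hmem _).2 (Or.inl g.2)⟩ :
              ↑(G ⊔ fromEdgeSet {s(a,b)}).edgeSet))).card := by
      refine Finset.sum_congr rfl fun g _ => ?_
      rw [hfr]
    have e4 : (∑ v : V, (f (Sum.inl v)).card)
        ≤ (∑ v : V, (f' (Sum.inl v)).card) + (k + A.card) := by
      calc ∑ v : V, (f (Sum.inl v)).card
          ≤ ∑ v : V, ((f' (Sum.inl v)).card +
              ((if v = b then k else 0) + (if v = a then A.card else 0))) :=
            Finset.sum_le_sum fun v _ => hpt v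
        _ = (∑ v : V, (f' (Sum.inl v)).card) + (k + A.card) := by
            rw [Finset.sum_add_distrib, Finset.sum_add_distrib]
            simp [Finset.sum_ite_eq']
    have e5 : (f' (Sum.inr eE)).card = A.card := by rw [hAdef]
    omega
  calc rdn (middleGraph G) k ≤ rdfWeight f := rdn_le' _ _ _ hrdf
    _ ≤ rdn (middleGraph (G ⊔ fromEdgeSet {s(a,b)})) k + k := by
        rw [← hw']
        exact hwle

end MainLemmas

/-- For an edge `e` of the complement of `G`,
`γ*_{rk}(G) − k ≤ γ*_{rk}(G + e) ≤ γ*_{rk}(G) + 1`. -/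
theorem stmt3 {V : Type*} [Fintype V] (G : SimpleGraph V) (k : ℕ) (e : Sym2 V)
    (he : e ∈ Gᶜ.edgeSet) :
    mrdn G k - k ≤ mrdn (G ⊔ fromEdgeSet {e}) k ∧
    mrdn (G ⊔ fromEdgeSet {e}) k ≤ mrdn G k + 1 := by
  classical
  rcases Nat.eq_zero_or_pos k with hk | hk
  · subst hk
    unfold mrdn
    rw [rdn_zero', rdn_zero']
    exact ⟨by omega, by omega⟩
  · revert he
    induction e using Sym2.ind with
    | _ a b =>
      intro he
      rw [SimpleGraph.mem_edgeSet, SimpleGraph.compl_adj] at he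
      obtain ⟨hab, hnadj⟩ := he
      unfold mrdn
      constructor
      · rw [Nat.sub_le_iff_le_add]
        exact le_trans (le_of_eq rdn_eq_of_inst)
          (le_trans (main_down G k hk a b hab hnadj)
            (Nat.add_le_add_right (le_of_eq rdn_eq_of_inst) k))
      · exact le_trans (le_of_eq rdn_eq_of_inst)
          (le_trans (main_up G k hk a b hab hnadj)
            (Nat.add_le_add_right (le_of_eq rdn_eq_of_inst) 1))
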